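/- Let θ ∈ (0,1) be irrational, θ_k = q_k θ − p_k. Suppose (b_h)_{h≥1} is a sequence of integers with 0 ≤ b₁ ≤ a₁ − 1, 0 ≤ b_h ≤ a_h for all h ≥ 2, and b_h = 0 whenever b_{h+1} = a_{h+1}. Then for every k ≥ 1, the tail σ_k = Σ_{h≥k} b_{h+1} θ_h satisfies |σ_k| ≤ |θ_{k−1}|, with strict inequality unless the tail (b_{k+1}, b_{k+2}, …) equals (a_{k+1}, 0, a_{k+3}, 0, …) or (0, a_{k+2}, 0, a_{k+4}, …). -/

import Mathlib

/-- Iterated Gauss map: the fractional parts appearing in the continued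
fraction algorithm for `θ ∈ (0,1)`. -/
noncomputable def gaussIter (θ : ℝ) : ℕ → ℝ
  | 0 => θ
  | n + 1 => 1 / gaussIter θ n - ⌊1 / gaussIter θ n⌋

/-- The `k`-th partial quotient `a_k` (for `k ≥ 1`) of `θ = [0; a₁, a₂, …]`. -/
noncomputable def cfa (θ : ℝ) (k : ℕ) : ℤ := ⌊1 / gaussIter θ (k - 1)⌋

/-- Numerators `p_k` of the convergents of `θ`. -/
noncomputable def cfp (θ : ℝ) : ℕ → ℤ
  | 0 => 0
  | 1 => 1
  | k + 2 => cfa θ (k + 2) * cfp θ (k + 1) + cfp θ k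

/-- Denominators `q_k` of the convergents of `θ`. -/
noncomputable def cfq (θ : ℝ) : ℕ → ℤ
  | 0 => 1
  | 1 => cfa θ 1
  | k + 2 => cfa θ (k + 2) * cfq θ (k + 1) + cfq θ k

/-- `θ_k = q_k θ - p_k`. -/
noncomputable def cftheta (θ : ℝ) (k : ℕ) : ℝ := (cfq θ k : ℝ) * θ - (cfp θ k : ℝ)

open Finset Filter Topology

namespace OstrowskiAux

noncomputable def PP (θ : ℝ) (n : ℕ) : ℝ := ∏ i ∈ Finset.range (n + 1), gaussIter θ i

variable {θ : ℝ}

lemma gauss_mem (hirr : Irrational θ) (h0 : 0 < θ) (h1 : θ < 1) (n : ℕ) :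
    Irrational (gaussIter θ n) ∧ 0 < gaussIter θ n ∧ gaussIter θ n < 1 := by
  induction n with
  | zero => exact ⟨hirr, h0, h1⟩
  | succ n ih =>
    obtain ⟨hi, hp, hl⟩ := ih
    have hfr : gaussIter θ (n + 1) = Int.fract (1 / gaussIter θ n) := rfl
    have hinv : Irrational (1 / gaussIter θ n) := by
      simpa [one_div] using hi.inv
    refine ⟨?_, ?_, ?_⟩
    · rw [hfr, Int.fract]; exact hinv.sub_intCast _
    · rw [hfr]; exact Int.fract_pos.mpr (hinv.ne_int _)
    · rw [hfr]; exact Int.fract_lt_one _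

lemma one_lt_inv (hirr : Irrational θ) (h0 : 0 < θ) (h1 : θ < 1) (n : ℕ) :
    1 < 1 / gaussIter θ n := by
  obtain ⟨_, hp, hl⟩ := gauss_mem hirr h0 h1 n
  rw [lt_div_iff₀ hp]; linarith

lemma one_le_cfa (hirr : Irrational θ) (h0 : 0 < θ) (h1 : θ < 1) {k : ℕ} (hk : 1 ≤ k) :
    (1 : ℤ) ≤ cfa θ k := by
  rw [cfa]
  exact Int.le_floor.mpr (by exact_mod_cast (one_lt_inv hirr h0 h1 (k - 1)).le)

lemma gauss_rec (n : ℕ) :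
    gaussIter θ (n + 1) = 1 / gaussIter θ n - (cfa θ (n + 1) : ℝ) := rfl

lemma PP_succ (n : ℕ) : PP θ (n + 1) = PP θ n * gaussIter θ (n + 1) :=
  Finset.prod_range_succ _ _

lemma PP_zero : PP θ 0 = θ := by simp [PP]; rfl

lemma PP_pos (hirr : Irrational θ) (h0 : 0 < θ) (h1 : θ < 1) (n : ℕ) : 0 < PP θ n :=
  Finset.prod_pos fun i _ => (gauss_mem hirr h0 h1 i).2.1

lemma PP_anti (hirr : Irrational θ) (h0 : 0 < θ) (h1 : θ < 1) (n : ℕ) :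
    PP θ (n + 1) < PP θ n := by
  rw [PP_succ]
  have := (gauss_mem hirr h0 h1 (n + 1)).2.2
  nlinarith [PP_pos hirr h0 h1 n, (gauss_mem hirr h0 h1 (n + 1)).2.1]

lemma theta_eq (hirr : Irrational θ) (h0 : 0 < θ) (h1 : θ < 1) :
    ∀ n, cftheta θ n = (-1) ^ n * PP θ n := by
  intro n
  induction n using Nat.twoStepInduction with
  | zero => simp [cftheta, cfp, cfq, PP_zero]
  | one =>
    have hx1 := gauss_rec (θ := θ) 0
    have hθ : θ ≠ 0 := ne_of_gt h0
    have hx0 : gaussIter θ 0 = θ := rfl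
    rw [hx0] at hx1
    have hP : PP θ 1 = θ * gaussIter θ 1 := by rw [PP_succ, PP_zero]
    rw [cftheta, hP, hx1]
    simp only [cfp, cfq]
    push_cast
    field_simp
    ring
  | more n ih1 ih =>
    have hrec : cftheta θ (n + 2)
        = (cfa θ (n + 2) : ℝ) * cftheta θ (n + 1) + cftheta θ n := by
      simp only [cftheta, cfp, cfq]
      push_cast
      ring
    have hx : gaussIter θ (n + 1) ≠ 0 := ne_of_gt (gauss_mem hirr h0 h1 (n + 1)).2.1
    have hP2 : PP θ (n + 2) = PP θ (n + 1) * gaussIter θ (n + 2) := PP_succ _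
    have hP1 : PP θ (n + 1) = PP θ n * gaussIter θ (n + 1) := PP_succ _
    have hx2 : gaussIter θ (n + 2) = 1 / gaussIter θ (n + 1) - (cfa θ (n + 2) : ℝ) :=
      gauss_rec _
    rw [hrec, ih, ih1, hP2, hx2, hP1]
    have h2 : (-1 : ℝ) ^ (n + 1) = (-1) ^ n * (-1) := by ring
    have h3 : (-1 : ℝ) ^ (n + 2) = (-1) ^ n := by ring
    rw [h2, h3]
    field_simp
    ring

lemma aP (hirr : Irrational θ) (h0 : 0 < θ) (h1 : θ < 1) (m : ℕ) :
    (cfa θ (m + 2) : ℝ) * PP θ (m + 1) = PP θ m - PP θ (m + 2) := by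
  have hx : gaussIter θ (m + 1) ≠ 0 := ne_of_gt (gauss_mem hirr h0 h1 (m + 1)).2.1
  have hP2 : PP θ (m + 2) = PP θ (m + 1) * gaussIter θ (m + 2) := PP_succ _
  have hP1 : PP θ (m + 1) = PP θ m * gaussIter θ (m + 1) := PP_succ _
  rw [hP2, gauss_rec (m + 1), hP1]
  field_simp
  ring

lemma PP_half (hirr : Irrational θ) (h0 : 0 < θ) (h1 : θ < 1) (m : ℕ) :
    PP θ (m + 2) < PP θ m / 2 := by
  have h := aP hirr h0 h1 m
  have ha : (1 : ℝ) ≤ (cfa θ (m + 2) : ℝ) := by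
    exact_mod_cast one_le_cfa hirr h0 h1 (by omega)
  have hp1 := PP_pos hirr h0 h1 (m + 1)
  have h12 := PP_anti hirr h0 h1 (m + 1)
  nlinarith

lemma PP_tendsto (hirr : Irrational θ) (h0 : 0 < θ) (h1 : θ < 1) (c : ℕ) :
    Tendsto (fun n : ℕ => PP θ (c + 2 * n)) atTop (𝓝 0) := by
  have hgeo : ∀ n : ℕ, PP θ (c + 2 * n) ≤ PP θ c * (1 / 2) ^ n := by
    intro n
    induction n with
    | zero => simp
    | succ n ih =>
      have h2 : c + 2 * (n + 1) = (c + 2 * n) + 2 := by ring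
      rw [h2]
      refine le_of_lt ?_
      calc PP θ ((c + 2 * n) + 2) < PP θ (c + 2 * n) / 2 := PP_half hirr h0 h1 _
        _ ≤ (PP θ c * (1 / 2) ^ n) / 2 := by linarith
        _ = PP θ c * (1 / 2) ^ (n + 1) := by ring
  have hup : Tendsto (fun n : ℕ => PP θ c * (1 / 2 : ℝ) ^ n) atTop (𝓝 0) := by
    have := (tendsto_pow_atTop_nhds_zero_of_lt_one (by norm_num : (0:ℝ) ≤ 1/2)
      (by norm_num : (1/2 : ℝ) < 1)).const_mul (PP θ c)
    simpa using this
  exact tendsto_of_tendsto_of_tendsto_of_le_of_le tendsto_const_nhds hup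
    (fun n => (PP_pos hirr h0 h1 _).le) hgeo

lemma hasSum_telescope {g : ℕ → ℝ} (hnn : ∀ j, 0 ≤ g j - g (j + 1))
    (hlim : Tendsto g atTop (𝓝 0)) :
    HasSum (fun j => g j - g (j + 1)) (g 0) := by
  rw [hasSum_iff_tendsto_nat_of_nonneg hnn]
  have h : (fun n : ℕ => ∑ i ∈ Finset.range n, (g i - g (i + 1))) = fun n => g 0 - g n := by
    funext n; exact Finset.sum_range_sub' g n
  rw [h]
  simpa using tendsto_const_nhds.sub hlim

end OstrowskiAux

open OstrowskiAux Filter Topology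

/-- Tail bound for Ostrowski expansions: if `(b_h)` satisfies the Ostrowski digit
rules, then `σ_k = Σ_{h ≥ k} b_{h+1} θ_h` satisfies `|σ_k| ≤ |θ_{k−1}|`, with strict
inequality unless the tail is `(a_{k+1}, 0, a_{k+3}, 0, …)` or `(0, a_{k+2}, 0, a_{k+4}, …)`. -/
theorem ostrowski_tail_bound (θ : ℝ) (hirr : Irrational θ) (h0 : 0 < θ) (h1 : θ < 1)
    (b : ℕ → ℕ)
    (hb1 : (b 1 : ℤ) ≤ cfa θ 1 - 1)
    (hb : ∀ h : ℕ, 2 ≤ h → (b h : ℤ) ≤ cfa θ h)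
    (hrule : ∀ h : ℕ, 1 ≤ h → (b (h + 1) : ℤ) = cfa θ (h + 1) → b h = 0) :
    ∀ k : ℕ, 1 ≤ k → ∃ σ : ℝ,
      HasSum (fun j : ℕ => (b (k + 1 + j) : ℝ) * cftheta θ (k + j)) σ ∧
      |σ| ≤ |cftheta θ (k - 1)| ∧
      ((¬ (∀ j : ℕ, (b (k + 1 + 2 * j) : ℤ) = cfa θ (k + 1 + 2 * j) ∧ b (k + 2 + 2 * j) = 0)) ∧
       (¬ (∀ j : ℕ, b (k + 1 + 2 * j) = 0 ∧ (b (k + 2 + 2 * j) : ℤ) = cfa θ (k + 2 + 2 * j))) →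
        |σ| < |cftheta θ (k - 1)|) := by
  rintro k hk
  obtain ⟨k', rfl⟩ : ∃ k', k = k' + 1 := ⟨k - 1, by omega⟩
  clear hk
  have hPpos := PP_pos hirr h0 h1
  have hθeq := theta_eq hirr h0 h1
  -- digit sequences and majorants
  set fe : ℕ → ℝ := fun j => (b (k' + 2 + 2 * j) : ℝ) * PP θ (k' + 1 + 2 * j) with hfe_def
  set fo : ℕ → ℝ := fun j => (b (k' + 3 + 2 * j) : ℝ) * PP θ (k' + 2 + 2 * j) with hfo_def
  set Ae : ℕ → ℝ := fun j => (cfa θ (k' + 2 + 2 * j) : ℝ) * PP θ (k' + 1 + 2 * j) with hAe_def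
  set Ao : ℕ → ℝ := fun j => (cfa θ (k' + 3 + 2 * j) : ℝ) * PP θ (k' + 2 + 2 * j) with hAo_def
  -- the even majorant telescopes to PP θ k'
  have keyE : ∀ j, Ae j = PP θ (k' + 2 * j) - PP θ (k' + 2 * (j + 1)) := by
    intro j
    have h2 : k' + 2 * (j + 1) = (k' + 2 * j) + 2 := by ring
    have h3 : k' + 2 + 2 * j = (k' + 2 * j) + 2 := by ring
    have h4 : k' + 1 + 2 * j = (k' + 2 * j) + 1 := by ring
    rw [hAe_def]
    simp only [h2, h3, h4]
    exact aP hirr h0 h1 (k' + 2 * j)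
  have keyO : ∀ j, Ao j = PP θ (k' + 1 + 2 * j) - PP θ (k' + 1 + 2 * (j + 1)) := by
    intro j
    have h2 : k' + 1 + 2 * (j + 1) = (k' + 1 + 2 * j) + 2 := by ring
    have h3 : k' + 3 + 2 * j = (k' + 1 + 2 * j) + 2 := by ring
    have h4 : k' + 2 + 2 * j = (k' + 1 + 2 * j) + 1 := by ring
    rw [hAo_def]
    simp only [h2, h3, h4]
    exact aP hirr h0 h1 (k' + 1 + 2 * j)
  have hcfa_nn : ∀ m : ℕ, 1 ≤ m → (0:ℝ) ≤ (cfa θ m : ℝ) := fun m hm => by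
    have := one_le_cfa hirr h0 h1 hm
    exact_mod_cast this.trans' (by norm_num)
  have hAe_nn : ∀ j, 0 ≤ Ae j := fun j =>
    mul_nonneg (hcfa_nn _ (by omega)) (hPpos _).le
  have hAo_nn : ∀ j, 0 ≤ Ao j := fun j =>
    mul_nonneg (hcfa_nn _ (by omega)) (hPpos _).le
  have hfe_nn : ∀ j, 0 ≤ fe j := fun j =>
    mul_nonneg (Nat.cast_nonneg _) (hPpos _).le
  have hfo_nn : ∀ j, 0 ≤ fo j := fun j =>
    mul_nonneg (Nat.cast_nonneg _) (hPpos _).le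
  have hfe_le : ∀ j, fe j ≤ Ae j := fun j => by
    have hbj := hb (k' + 2 + 2 * j) (by omega)
    have : ((b (k' + 2 + 2 * j) : ℕ) : ℝ) ≤ (cfa θ (k' + 2 + 2 * j) : ℝ) := by
      exact_mod_cast hbj
    exact mul_le_mul_of_nonneg_right this (hPpos _).le
  have hfo_le : ∀ j, fo j ≤ Ao j := fun j => by
    have hbj := hb (k' + 3 + 2 * j) (by omega)
    have : ((b (k' + 3 + 2 * j) : ℕ) : ℝ) ≤ (cfa θ (k' + 3 + 2 * j) : ℝ) := by
      exact_mod_cast hbj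
    exact mul_le_mul_of_nonneg_right this (hPpos _).le
  have hAe_sum : HasSum Ae (PP θ k') := by
    have h := hasSum_telescope (g := fun j => PP θ (k' + 2 * j))
      (fun j => by rw [← keyE j]; exact hAe_nn j) (PP_tendsto hirr h0 h1 k')
    have he : Ae = fun j => PP θ (k' + 2 * j) - PP θ (k' + 2 * (j + 1)) := funext keyE
    rw [he]
    simpa using h
  have hAo_sum : HasSum Ao (PP θ (k' + 1)) := by
    have h := hasSum_telescope (g := fun j => PP θ (k' + 1 + 2 * j))
      (fun j => by rw [← keyO j]; exact hAo_nn j) (PP_tendsto hirr h0 h1 (k' + 1))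
    have he : Ao = fun j => PP θ (k' + 1 + 2 * j) - PP θ (k' + 1 + 2 * (j + 1)) := funext keyO
    rw [he]
    simpa using h
  have sfe : Summable fe := Summable.of_nonneg_of_le hfe_nn hfe_le hAe_sum.summable
  have sfo : Summable fo := Summable.of_nonneg_of_le hfo_nn hfo_le hAo_sum.summable
  set E : ℝ := ∑' j, fe j with hE_def
  set O : ℝ := ∑' j, fo j with hO_def
  have hE_nn : 0 ≤ E := tsum_nonneg hfe_nn
  have hO_nn : 0 ≤ O := tsum_nonneg hfo_nn
  have hE_le : E ≤ PP θ k' := by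
    have := Summable.tsum_le_tsum hfe_le sfe hAe_sum.summable
    rwa [hAe_sum.tsum_eq] at this
  have hO_le : O ≤ PP θ (k' + 1) := by
    have := Summable.tsum_le_tsum hfo_le sfo hAo_sum.summable
    rwa [hAo_sum.tsum_eq] at this
  have hPlt : PP θ (k' + 1) < PP θ k' := PP_anti hirr h0 h1 k'
  -- the signed sum
  refine ⟨(-1 : ℝ) ^ (k' + 1) * E + (-1 : ℝ) ^ (k' + 2) * O, ?_, ?_, ?_⟩
  · -- HasSum
    have he : HasSum (fun j => (b (k' + 1 + 1 + 2 * j) : ℝ) * cftheta θ (k' + 1 + 2 * j))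
        ((-1 : ℝ) ^ (k' + 1) * E) := by
      have h := sfe.hasSum.mul_left ((-1 : ℝ) ^ (k' + 1))
      have heq : (fun j => (b (k' + 1 + 1 + 2 * j) : ℝ) * cftheta θ (k' + 1 + 2 * j))
          = fun j => (-1 : ℝ) ^ (k' + 1) * fe j := by
        funext j
        rw [hθeq (k' + 1 + 2 * j)]
        have hpow : (-1 : ℝ) ^ (k' + 1 + 2 * j) = (-1 : ℝ) ^ (k' + 1) := by
          rw [pow_add, pow_mul]
          norm_num
        rw [hpow, hfe_def]
        have : k' + 1 + 1 + 2 * j = k' + 2 + 2 * j := by ring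
        rw [this]
        ring
      rw [heq]
      exact h
    have ho : HasSum (fun j => (b (k' + 1 + 1 + (2 * j + 1)) : ℝ)
        * cftheta θ (k' + 1 + (2 * j + 1))) ((-1 : ℝ) ^ (k' + 2) * O) := by
      have h := sfo.hasSum.mul_left ((-1 : ℝ) ^ (k' + 2))
      have heq : (fun j => (b (k' + 1 + 1 + (2 * j + 1)) : ℝ)
          * cftheta θ (k' + 1 + (2 * j + 1)))
          = fun j => (-1 : ℝ) ^ (k' + 2) * fo j := by
        funext j
        have hi1 : k' + 1 + (2 * j + 1) = k' + 2 + 2 * j := by ring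
        have hi2 : k' + 1 + 1 + (2 * j + 1) = k' + 3 + 2 * j := by ring
        rw [hi1, hi2, hθeq (k' + 2 + 2 * j)]
        have hpow : (-1 : ℝ) ^ (k' + 2 + 2 * j) = (-1 : ℝ) ^ (k' + 2) := by
          rw [pow_add, pow_mul]
          norm_num
        rw [hpow, hfo_def]
        ring
      rw [heq]
      exact h
    exact HasSum.even_add_odd he ho
  · -- |σ| ≤ |θ_{k-1}|
    have habs : |cftheta θ (k' + 1 - 1)| = PP θ k' := by
      have : k' + 1 - 1 = k' := rfl
      rw [this, hθeq k', abs_mul, abs_pow, abs_neg, abs_one, one_pow, one_mul,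
        abs_of_pos (hPpos k')]
    rw [habs]
    have hσ : (-1 : ℝ) ^ (k' + 1) * E + (-1 : ℝ) ^ (k' + 2) * O
        = (-1 : ℝ) ^ (k' + 1) * (E - O) := by ring
    rw [hσ, abs_mul, abs_pow, abs_neg, abs_one, one_pow, one_mul]
    rw [abs_le]
    constructor <;> linarith
  · -- strictness
    rintro ⟨hA, -⟩
    push_neg at hA
    obtain ⟨j, hj⟩ := hA
    have habs : |cftheta θ (k' + 1 - 1)| = PP θ k' := by
      have : k' + 1 - 1 = k' := rfl
      rw [this, hθeq k', abs_mul, abs_pow, abs_neg, abs_one, one_pow, one_mul,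
        abs_of_pos (hPpos k')]
    rw [habs]
    have hσ : (-1 : ℝ) ^ (k' + 1) * E + (-1 : ℝ) ^ (k' + 2) * O
        = (-1 : ℝ) ^ (k' + 1) * (E - O) := by ring
    rw [hσ, abs_mul, abs_pow, abs_neg, abs_one, one_pow, one_mul]
    have hupper : E - O < PP θ k' := by
      by_cases hcase : (b (k' + 1 + 1 + 2 * j) : ℤ) = cfa θ (k' + 1 + 1 + 2 * j)
      · -- then b (k'+2+2j) = a, so b (k'+3+2j) ≠ 0, hence O > 0
        have hbne := hj hcase
        have hb3 : 1 ≤ b (k' + 1 + 2 + 2 * j) := Nat.one_le_iff_ne_zero.mpr hbne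
        have hfoj : 0 < fo j := by
          show (0:ℝ) < (b (k' + 3 + 2 * j) : ℝ) * PP θ (k' + 2 + 2 * j)
          have hidx : k' + 1 + 2 + 2 * j = k' + 3 + 2 * j := by ring
          have : (1 : ℝ) ≤ (b (k' + 3 + 2 * j) : ℝ) := by
            rw [← hidx]; exact_mod_cast hb3
          nlinarith [hPpos (k' + 2 + 2 * j)]
        have hfoO : fo j ≤ O := Summable.le_tsum sfo j fun i _ => hfo_nn i
        linarith
      · -- then b < a at the even spot, so E < PP θ k'
        have hbj := hb (k' + 1 + 1 + 2 * j) (by omega)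
        have hlt : (b (k' + 1 + 1 + 2 * j) : ℤ) < cfa θ (k' + 1 + 1 + 2 * j) :=
          lt_of_le_of_ne hbj hcase
        have hfej : fe j < Ae j := by
          show (b (k' + 2 + 2 * j) : ℝ) * PP θ (k' + 1 + 2 * j)
            < (cfa θ (k' + 2 + 2 * j) : ℝ) * PP θ (k' + 1 + 2 * j)
          have hidx : k' + 1 + 1 + 2 * j = k' + 2 + 2 * j := by ring
          rw [hidx] at hlt
          have : ((b (k' + 2 + 2 * j) : ℕ) : ℝ) < (cfa θ (k' + 2 + 2 * j) : ℝ) := by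
            exact_mod_cast hlt
          exact mul_lt_mul_of_pos_right this (hPpos _)
        have hElt : E < PP θ k' := by
          rw [hE_def, ← hAe_sum.tsum_eq]
          exact Summable.tsum_lt_tsum_of_nonneg hfe_nn hfe_le hfej hAe_sum.summable
        linarith
    have hlower : -(PP θ k') < E - O := by linarith
    rw [abs_lt]
    exact ⟨hlower, hupper⟩
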